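/- Let d ≡ 1 (mod 8) be a positive squarefree integer and κ(d) the caliber number of Q(√d). Then 2^(κ(d)+4) > d. -/

import Mathlib

noncomputable section

/-- The binary quadratic form `[A,B,C]` is reduced of discriminant `D`. -/
def IsReducedForm (D A B C : ℤ) : Prop :=
  D = B ^ 2 - 4 * A * C ∧ 0 < A ∧ B < 0 ∧ C < 0 ∧
    ((|B| : ℤ) : ℝ) < Real.sqrt D ∧
    Real.sqrt D - ((|B| : ℤ) : ℝ) < 2 * (A : ℝ) ∧
    2 * (A : ℝ) < Real.sqrt D + ((|B| : ℤ) : ℝ)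

/-- The form `[A,B,C]` is primitive. -/
def IsPrimitiveForm (A B C : ℤ) : Prop := Int.gcd A (Int.gcd B C) = 1

/-- The caliber number: the number of reduced primitive forms of discriminant `D`. -/
def caliber (D : ℤ) : ℕ :=
  Nat.card {f : ℤ × ℤ × ℤ //
    IsReducedForm D f.1 f.2.1 f.2.2 ∧ IsPrimitiveForm f.1 f.2.1 f.2.2}

/-- `rho D A` is the number of classes `[B] ∈ ℤ/2Aℤ` with `B ^ 2 ≡ D (mod 4A)`. -/
def rho (D : ℤ) (A : ℕ) : ℕ :=
  Nat.card {B : ZMod (2 * A) //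
    ∃ b : ℤ, (b : ZMod (2 * A)) = B ∧ (4 * (A : ℤ)) ∣ b ^ 2 - D}

/-- The discriminant of the real quadratic field `ℚ(√d)` for `d` squarefree. -/
def disc (d : ℕ) : ℤ := if d % 4 = 1 then (d : ℤ) else 4 * d

/-- The Kronecker symbol `(D / p)` for a prime `p` (via the Jacobi symbol for odd `p`). -/
def kronecker (D : ℤ) (p : ℕ) : ℤ :=
  if p = 2 then (if D % 8 = 1 then 1 else if D % 8 = 5 then -1 else 0)
  else jacobiSym D p

end

/-- Square roots of `d` modulo powers of two. -/
lemma sqrtmod (d : ℤ) (hd : d % 8 = 1) (k : ℕ) :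
    ∃ b : ℤ, Odd b ∧ (2 ^ (k + 3) : ℤ) ∣ b ^ 2 - d := by
  induction k with
  | zero =>
    refine ⟨1, odd_one, ?_⟩
    have : (8:ℤ) ∣ 1 ^ 2 - d := by omega
    simpa using this
  | succ k ih =>
    obtain ⟨b, hb, t, ht⟩ := ih
    rcases Int.even_or_odd t with ⟨u, hu⟩ | ⟨u, hu⟩
    · refine ⟨b, hb, ⟨u, ?_⟩⟩
      rw [ht, hu]; ring
    · obtain ⟨m, hm⟩ := hb
      refine ⟨b + 2 ^ (k + 2), ⟨m + 2 ^ (k + 1), by rw [hm]; ring⟩, ⟨u + m + 1 + 2 ^ k, ?_⟩⟩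
      have h1 : b ^ 2 - d = 2 ^ (k+3) * t := ht
      linear_combination h1 + 2^(k+3) * hu + 2^(k+3) * hm

/-- The key construction: a reduced primitive form with leading coefficient `2 ^ k`
whose middle coefficient is congruent to `r` modulo `2 ^ (k + 1)`. -/
lemma key (d : ℕ) (hd : Squarefree d) (h9 : 9 ≤ d) (k : ℕ) (r : ℤ)
    (hr : Odd r) (hrd : (2:ℤ) ^ (k + 3) ∣ r ^ 2 - (d:ℤ))
    (hk : (2:ℤ) ^ (k + 1) ≤ (Nat.sqrt d : ℤ)) :
    ∃ b : ℤ, Odd b ∧ (2:ℤ) ^ (k + 1) ∣ b - r ∧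
      IsReducedForm (d:ℤ) (2 ^ k) (-b) ((b ^ 2 - (d:ℤ)) / 2 ^ (k + 2)) ∧
      IsPrimitiveForm (2 ^ k) (-b) ((b ^ 2 - (d:ℤ)) / 2 ^ (k + 2)) := by
  set sn := Nat.sqrt d with hsn
  -- d is not a perfect square
  have hns : sn * sn < d := by
    rcases Nat.lt_or_ge (sn * sn) d with h | h
    · exact h
    · exfalso
      have h1 : sn * sn ≤ d := by have := Nat.sqrt_le' d; simpa [pow_two] using this
      have heq : sn * sn = d := le_antisymm h1 h
      have h2 : IsUnit sn := hd sn (by rw [heq])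
      have h3 : sn = 1 := Nat.isUnit_iff.mp h2
      rw [h3] at heq
      omega
  have hlt : d < (sn + 1) ^ 2 := Nat.lt_succ_sqrt' d
  set s : ℤ := (sn : ℤ) with hs
  set M : ℤ := 2 ^ (k + 1) with hM
  have hM0 : 0 < M := by positivity
  set q : ℤ := (s - r) / M with hq
  set b : ℤ := r + M * q with hb
  -- window bounds
  have hwin : s - M < b ∧ b ≤ s := by
    have h1 := Int.mul_ediv_add_emod (s - r) M
    have h2 := Int.emod_nonneg (s - r) (ne_of_gt hM0)
    have h3 := Int.emod_lt_of_pos (s - r) hM0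
    constructor <;> [nlinarith; nlinarith]
  obtain ⟨hm, hm'⟩ := hr
  have hbodd : Odd b := ⟨hm + 2 ^ k * q, by rw [hb, hm', hM]; ring⟩
  have hbpos : 0 < b := by
    have : M ≤ s := hk
    omega
  have hbs : b ^ 2 < (d:ℤ) := by
    have h1 : (sn:ℤ) * sn < (d:ℤ) := by exact_mod_cast hns
    nlinarith [hwin.2, hbpos]
  -- divisibility
  have hdvd : (2:ℤ) ^ (k + 2) ∣ b ^ 2 - (d:ℤ) := by
    obtain ⟨t, ht⟩ := hrd
    refine ⟨2 ^ k * q ^ 2 + q * (2 * hm + 1) + 2 * t, ?_⟩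
    rw [hb, hM]
    rw [hm'] at ht ⊢
    linear_combination ht
  set C : ℤ := (b ^ 2 - (d:ℤ)) / 2 ^ (k + 2) with hC
  have hCeq : (2:ℤ) ^ (k + 2) * C = b ^ 2 - (d:ℤ) := Int.mul_ediv_cancel' hdvd
  have hCneg : C < 0 := by nlinarith [hCeq, hbs, pow_pos (by norm_num : (0:ℤ) < 2) (k+2)]
  have habs : |(-b)| = b := by rw [abs_neg, abs_of_pos hbpos]
  have hdpos : (0:ℝ) < (d:ℤ) := by push_cast; positivity
  have hsltsqrt : (s:ℝ) < Real.sqrt ((d:ℤ):ℝ) := by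
    rw [Real.lt_sqrt (by positivity)]
    have h1 : (sn:ℤ) * (sn:ℤ) < ((d:ℕ):ℤ) := by exact_mod_cast hns
    have h2 : (s:ℝ) ^ 2 < (((d:ℕ):ℤ):ℝ) := by
      have : s ^ 2 < ((d:ℕ):ℤ) := by rw [hs]; nlinarith
      exact_mod_cast this
    exact h2
  refine ⟨b, hbodd, ⟨q, by rw [hb]; ring⟩, ⟨?_, by positivity, by omega, hCneg, ?_, ?_, ?_⟩, ?_⟩
  · linear_combination hCeq
  · rw [habs]
    rw [Real.lt_sqrt (by exact_mod_cast hbpos.le)]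
    exact_mod_cast hbs
  · rw [habs, sub_lt_iff_lt_add]
    have h2 : (2:ℝ) * ((2:ℤ)^k : ℤ) + (b:ℝ) = ((M + b : ℤ) : ℝ) := by
      push_cast [hM]; ring
    rw [h2]
    rw [Real.sqrt_lt' (by exact_mod_cast (by omega : (0:ℤ) < M + b))]
    have : (d:ℤ) < (M + b) ^ 2 := by
      have h1 : ((d:ℕ):ℤ) < ((sn:ℤ) + 1) ^ 2 := by exact_mod_cast hlt
      nlinarith [hwin.1, hbpos, hM0]
    exact_mod_cast this
  · rw [habs]
    have h1 : (2:ℝ) * ((2:ℤ)^k : ℤ) = ((M : ℤ) : ℝ) := by push_cast [hM]; ring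
    rw [h1]
    have h2 : ((M:ℤ):ℝ) ≤ (s:ℝ) := by exact_mod_cast hk
    have h3 : (0:ℝ) < b := by exact_mod_cast hbpos
    calc ((M:ℤ):ℝ) ≤ (s:ℝ) := h2
      _ < Real.sqrt ((d:ℤ):ℝ) := hsltsqrt
      _ < Real.sqrt ((d:ℤ):ℝ) + ((b:ℤ):ℝ) := by exact_mod_cast lt_add_of_pos_right _ h3
  · -- primitivity
    unfold IsPrimitiveForm
    set g : ℕ := Int.gcd (2 ^ k) (Int.gcd (-b) C) with hg
    have hga : (g:ℤ) ∣ 2 ^ k := Int.gcd_dvd_left _ _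
    have hgb : (g:ℤ) ∣ -b := dvd_trans (Int.gcd_dvd_right _ _) (by exact_mod_cast (Int.gcd_dvd_left _ _ : (Int.gcd (-b) C : ℤ) ∣ -b))
    have hgn : g ∣ 2 ^ k := by
      have : (g:ℤ) ∣ ((2 ^ k : ℕ) : ℤ) := by push_cast; exact hga
      exact_mod_cast this
    obtain ⟨i, hi, hgi⟩ := (Nat.dvd_prime_pow Nat.prime_two).mp hgn
    rcases Nat.eq_zero_or_pos i with h0 | h0
    · rw [hg] at hgi ⊢; rw [hgi, h0, pow_zero]
    · exfalso
      have h2g : (2:ℕ) ∣ g := by rw [hgi]; exact dvd_pow_self 2 (by omega)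
      have h2gz : (2:ℤ) ∣ (g:ℤ) := by exact_mod_cast h2g
      have h2b : (2:ℤ) ∣ -b := h2gz.trans hgb
      obtain ⟨c, hc⟩ := h2b
      obtain ⟨e, he⟩ := hbodd
      omega

/-- The set of reduced primitive forms of discriminant `D ≥ 1` is finite. -/
lemma forms_finite (D : ℤ) (hD : 1 ≤ D) :
    {f : ℤ × ℤ × ℤ | IsReducedForm D f.1 f.2.1 f.2.2 ∧ IsPrimitiveForm f.1 f.2.1 f.2.2}.Finite := by
  apply Set.Finite.subset (Set.finite_Icc ((-D, -D, -D) : ℤ × ℤ × ℤ) (D, D, D))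
  rintro ⟨A, B, C⟩ ⟨⟨hdisc, hA, hB, hC, h5, h6, h7⟩, -⟩
  dsimp only at hdisc hA hB hC h5 h6 h7 ⊢
  have hDR : (1:ℝ) ≤ (D:ℝ) := by exact_mod_cast hD
  have hsd : Real.sqrt (D:ℝ) ≤ (D:ℝ) := by
    rw [Real.sqrt_le_left (by linarith)]
    nlinarith
  have hBD : |B| ≤ D := by
    have : ((|B|:ℤ):ℝ) < (D:ℝ) := lt_of_lt_of_le h5 hsd
    exact_mod_cast this.le
  have hAD : A ≤ D := by
    have h1 : ((|B|:ℤ):ℝ) < (D:ℝ) := lt_of_lt_of_le h5 hsd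
    have h2 : 2 * (A:ℝ) < 2 * (D:ℝ) := by linarith
    have h3 : (A:ℝ) < (D:ℝ) := by linarith
    exact_mod_cast h3.le
  have hCD : -D ≤ C := by
    nlinarith [sq_nonneg B, mul_le_mul_of_nonneg_right (show (1:ℤ) ≤ A by omega)
      (show (0:ℤ) ≤ -C by omega)]
  have := abs_le.mp hBD
  simp only [Set.mem_Icc, Prod.mk_le_mk]
  refine ⟨⟨by omega, by omega, by omega⟩, by omega, by omega, by omega⟩

theorem stmt7 (d : ℕ) (hd : Squarefree d) (h8 : d % 8 = 1) :
    (d : ℕ) < 2 ^ (caliber (disc d) + 4) := by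
  have h4 : d % 4 = 1 := by omega
  have hdisc : disc d = (d:ℤ) := by unfold disc; rw [if_pos h4]
  rw [hdisc]
  by_cases hd1 : d < 9
  · have hone : d = 1 := by omega
    subst hone
    have := Nat.one_lt_two_pow_iff.mpr (show caliber ((1:ℕ):ℤ) + 4 ≠ 0 by omega)
    exact this
  push_neg at hd1
  have h9 : 9 ≤ d := hd1
  set n := Nat.log 2 d with hn
  have hn3 : 3 ≤ n := by
    have h23 : 2 ^ 3 ≤ d := by omega
    exact (Nat.le_log_iff_pow_le (by norm_num) (by omega)).mpr h23
  set K := n / 2 - 1 with hK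
  have hpow1 : 2 ^ (2 * K + 2) ≤ d :=
    le_trans (Nat.pow_le_pow_right (by norm_num) (by omega)) (Nat.pow_log_le_self 2 (by omega))
  have hpow2 : d < 2 ^ (2 * K + 5) :=
    lt_of_lt_of_le (Nat.lt_pow_succ_log_self (by norm_num) d)
      (Nat.pow_le_pow_right (by norm_num) (by omega))
  have hsqK : (2:ℤ) ^ (K + 1) ≤ (Nat.sqrt d : ℤ) := by
    have h1 : 2 ^ (K + 1) ≤ Nat.sqrt d := by
      rw [Nat.le_sqrt]
      calc 2 ^ (K+1) * 2 ^ (K+1) = 2 ^ (2*K+2) := by rw [← pow_add]; ring_nf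
        _ ≤ d := hpow1
    exact_mod_cast h1
  have hd8 : ((d:ℕ):ℤ) % 8 = 1 := by omega
  choose rr hrr1 hrr2 using sqrtmod (d:ℤ) hd8
  have main : ∀ j : ℤ, ∃ b : ℤ, j.natAbs ≤ K →
      (Odd b ∧ (2:ℤ) ^ (j.natAbs + 1) ∣ b - (if 0 ≤ j then rr j.natAbs else -rr j.natAbs) ∧
        IsReducedForm (d:ℤ) (2 ^ j.natAbs) (-b) ((b ^ 2 - (d:ℤ)) / 2 ^ (j.natAbs + 2)) ∧
        IsPrimitiveForm (2 ^ j.natAbs) (-b) ((b ^ 2 - (d:ℤ)) / 2 ^ (j.natAbs + 2))) := by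
    intro j
    by_cases hj : j.natAbs ≤ K
    · set k := j.natAbs with hk
      have hro : Odd (if 0 ≤ j then rr k else -rr k) := by
        split
        · exact hrr1 k
        · exact (hrr1 k).neg
      have hrd : (2:ℤ) ^ (k + 3) ∣ (if 0 ≤ j then rr k else -rr k) ^ 2 - (d:ℤ) := by
        split
        · exact hrr2 k
        · have hsq : (-rr k) ^ 2 = (rr k) ^ 2 := by ring
          rw [hsq]; exact hrr2 k
      have hk2 : (2:ℤ) ^ (k + 1) ≤ (Nat.sqrt d : ℤ) :=
        le_trans (pow_le_pow_right₀ (by norm_num : (1:ℤ) ≤ 2) (by omega)) hsqK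
      obtain ⟨b, hb1, hb2, hb3, hb4⟩ := key d hd h9 k _ hro hrd hk2
      exact ⟨b, fun _ => ⟨hb1, hb2, hb3, hb4⟩⟩
    · exact ⟨0, fun h => absurd h hj⟩
  choose bf hbf using main
  have hfin : {f : ℤ × ℤ × ℤ |
      IsReducedForm (d:ℤ) f.1 f.2.1 f.2.2 ∧ IsPrimitiveForm f.1 f.2.1 f.2.2}.Finite :=
    forms_finite (d:ℤ) (by exact_mod_cast (by omega : 1 ≤ d))
  haveI hfinT : Finite {f : ℤ × ℤ × ℤ //
      IsReducedForm (d:ℤ) f.1 f.2.1 f.2.2 ∧ IsPrimitiveForm f.1 f.2.1 f.2.2} := hfin.to_subtype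
  set J : Fin (2*K+1) → ℤ := fun i => ((i:ℕ):ℤ) - (K:ℤ) with hJ
  have hJa : ∀ i : Fin (2*K+1), (J i).natAbs ≤ K := by
    intro i
    have hi : ((i:ℕ):ℤ) < 2*K+1 := by exact_mod_cast i.isLt
    simp only [hJ]
    omega
  set G : Fin (2*K+1) → {f : ℤ × ℤ × ℤ //
      IsReducedForm (d:ℤ) f.1 f.2.1 f.2.2 ∧ IsPrimitiveForm f.1 f.2.1 f.2.2} := fun i =>
    ⟨(2 ^ (J i).natAbs, -(bf (J i)), ((bf (J i)) ^ 2 - (d:ℤ)) / 2 ^ ((J i).natAbs + 2)),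
      ⟨(hbf (J i) (hJa i)).2.2.1, (hbf (J i) (hJa i)).2.2.2⟩⟩ with hG
  have hGinj : Function.Injective G := by
    intro i i' he
    have h1 : (2:ℤ) ^ (J i).natAbs = 2 ^ (J i').natAbs := congrArg (fun f => f.val.1) he
    have h2 : bf (J i) = bf (J i') := by
      have := congrArg (fun f => f.val.2.1) he
      simpa [hG] using this
    have hk : (J i).natAbs = (J i').natAbs := by
      have h1n : (2:ℕ) ^ (J i).natAbs = 2 ^ (J i').natAbs := by exact_mod_cast h1
      exact Nat.pow_right_injective (le_refl 2) h1n
    have hii : ((i:ℕ):ℤ) < 2*K+1 := by exact_mod_cast i.isLt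
    have hii' : ((i':ℕ):ℤ) < 2*K+1 := by exact_mod_cast i'.isLt
    have hJeq : J i = J i' := by
      rcases le_or_gt 0 (J i) with hp | hp <;> rcases le_or_gt 0 (J i') with hp' | hp'
      · omega
      · -- mixed signs: contradiction
        exfalso
        have hd1 := (hbf (J i) (hJa i)).2.1
        have hd2 := (hbf (J i') (hJa i')).2.1
        rw [if_pos hp] at hd1
        rw [if_neg (not_le.mpr hp')] at hd2
        rw [← hk] at hd2
        set k := (J i).natAbs with hkk
        have hk1 : 1 ≤ k := by omega
        have hdd : (2:ℤ) ^ (k+1) ∣ 2 * rr k := by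
          have := dvd_sub hd1 hd2
          rw [h2] at this
          have heq : bf (J i') - rr k - (bf (J i') - -rr k) = -(2 * rr k) := by ring
          rw [heq] at this
          exact (dvd_neg.mp this)
        have h4d : (4:ℤ) ∣ 2 ^ (k+1) := by
          have : (2:ℤ)^2 ∣ 2^(k+1) := pow_dvd_pow 2 (by omega)
          simpa using this
        obtain ⟨c, hc⟩ := h4d.trans hdd
        obtain ⟨m, hm⟩ := hrr1 k
        omega
      · exfalso
        have hd1 := (hbf (J i) (hJa i)).2.1
        have hd2 := (hbf (J i') (hJa i')).2.1
        rw [if_neg (not_le.mpr hp)] at hd1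
        rw [if_pos hp'] at hd2
        rw [← hk] at hd2
        set k := (J i).natAbs with hkk
        have hk1 : 1 ≤ k := by omega
        have hdd : (2:ℤ) ^ (k+1) ∣ 2 * rr k := by
          have := dvd_sub hd2 hd1
          rw [h2] at this
          have heq : bf (J i') - rr k - (bf (J i') - -rr k) = -(2 * rr k) := by ring
          rw [heq] at this
          exact (dvd_neg.mp this)
        have h4d : (4:ℤ) ∣ 2 ^ (k+1) := by
          have : (2:ℤ)^2 ∣ 2^(k+1) := pow_dvd_pow 2 (by omega)
          simpa using this
        obtain ⟨c, hc⟩ := h4d.trans hdd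
        obtain ⟨m, hm⟩ := hrr1 k
        omega
      · omega
    apply Fin.ext
    have : ((i:ℕ):ℤ) = ((i':ℕ):ℤ) := by simp only [hJ] at hJeq; omega
    exact_mod_cast this
  have hcard : 2*K+1 ≤ caliber (d:ℤ) := by
    have h := Nat.card_le_card_of_injective G hGinj
    simpa [caliber, Nat.card_eq_fintype_card] using h
  calc (d:ℕ) < 2 ^ (2*K+5) := hpow2
    _ ≤ 2 ^ (caliber (d:ℤ) + 4) := Nat.pow_le_pow_right (by norm_num) (by omega)
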